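/- Suppose v and w are solutions in C¹([0,T], l²(ℤ^d)) of the linear equation i v' + Δ_δ v = 0 and the nonlinear equation i w' + Δ_δ w + γ|w|^{2σ} w = 0 respectively, with ‖v(0) − w(0)‖_{l²} ≤ C₀ ε and ‖w(0)‖_{l²} ≤ C_{w,0} ε for some 0 < ε < 1. Then for any T ≤ C_T ε^{−2σ}, the difference satisfies ‖v(t) − w(t)‖_{l²} ≤ (C₀ + |γ| C_{w,0}^{2σ+1} C_T) ε for all t ∈ [0, T]. -/

import Mathlib

open scoped ComplexConjugate ENNReal
section Aux
variable {ι : Type*} [AddCommGroup ι]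

variable {ι : Type*} [AddCommGroup ι]

lemma my_summable_sq (u : lp (fun _ : ι => ℂ) 2) : Summable (fun n => ‖u n‖ ^ 2) := by
  have h := (lp.memℓp u).summable (p := 2) (by norm_num)
  have heq : ∀ n : ι, ‖u n‖ ^ (2 : ℝ≥0∞).toReal = ‖u n‖ ^ 2 := by
    intro n
    rw [ENNReal.toReal_ofNat]
    rw [show (2:ℝ) = ((2:ℕ):ℝ) by norm_num, Real.rpow_natCast]
  simpa [heq] using h

lemma my_summable_sq_shift (u : lp (fun _ : ι => ℂ) 2) (a : ι) :
    Summable (fun n => ‖u (n + a)‖ ^ 2) := by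
  have h := (my_summable_sq u).comp_injective (add_left_injective a)
  exact h

lemma my_summable_mul (u : lp (fun _ : ι => ℂ) 2) (a b : ι) :
    Summable (fun n => conj (u (n + a)) * u (n + b)) := by
  apply Summable.of_norm
  have hb : ∀ n, ‖conj (u (n + a)) * u (n + b)‖ ≤ (‖u (n + a)‖ ^ 2 + ‖u (n + b)‖ ^ 2) / 2 := by
    intro n
    rw [norm_mul, RCLike.norm_conj]
    nlinarith [sq_nonneg (‖u (n+a)‖ - ‖u (n+b)‖), norm_nonneg (u (n+a)), norm_nonneg (u (n+b))]
  exact Summable.of_nonneg_of_le (fun n => norm_nonneg _) hb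
    (((my_summable_sq_shift u a).add (my_summable_sq_shift u b)).div_const 2)

lemma my_tsum_shift (F : ι → ℂ) (a : ι) : ∑' n, F (n + a) = ∑' n, F n :=
  (Equiv.addRight a).tsum_eq F

lemma my_Q_eq (u : lp (fun _ : ι => ℂ) 2) (a : ι) :
    ∑' n, conj (u n) * u (n + a) = ∑' n, conj (u (n + -a)) * u n := by
  have h := my_tsum_shift (fun m => conj (u (m + -a)) * u m) a
  simpa using h

lemma my_symA (u : lp (fun _ : ι => ℂ) 2) {J : Type*} [Fintype J] (e : J → ι) (c : ι → ℂ)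
    (hc : ∀ n, conj (c n) = c n) (hcs : Summable fun n => c n * (conj (u n) * u n))
    (Au : lp (fun _ : ι => ℂ) 2)
    (hA : ∀ n, Au n = (∑ j, (u (n + e j) - 2 * u n + u (n - e j))) + c n * u n) :
    (inner ℂ Au u : ℂ) = inner ℂ u Au := by
  have S0 : Summable (fun n => conj (u n) * u n) := by simpa using my_summable_mul u 0 0
  have Sp : ∀ a : ι, Summable (fun n => conj (u (n + a)) * u n) := fun a => by
    simpa using my_summable_mul u a 0
  have Sq : ∀ a : ι, Summable (fun n => conj (u n) * u (n + a)) := fun a => by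
    simpa using my_summable_mul u 0 a
  have hL : ∀ n, conj (Au n) * u n =
      (∑ j, (conj (u (n + e j)) * u n - 2 * (conj (u n) * u n) + conj (u (n + -e j)) * u n)) +
        c n * (conj (u n) * u n) := by
    intro n
    rw [hA n, map_add, map_sum, add_mul, Finset.sum_mul]
    congr 1
    · refine Finset.sum_congr rfl fun j _ => ?_
      simp only [sub_eq_add_neg, map_add, map_neg, map_mul, map_ofNat]
      ring
    · rw [map_mul, hc]
      ring
  have hR : ∀ n, conj (u n) * Au n =
      (∑ j, (conj (u n) * u (n + e j) - 2 * (conj (u n) * u n) + conj (u n) * u (n + -e j))) +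
        c n * (conj (u n) * u n) := by
    intro n
    rw [hA n, mul_add, Finset.mul_sum]
    congr 1
    · refine Finset.sum_congr rfl fun j _ => ?_
      simp only [sub_eq_add_neg]
      ring
    · ring
  have SLj : ∀ j : J, Summable (fun n =>
      conj (u (n + e j)) * u n - 2 * (conj (u n) * u n) + conj (u (n + -e j)) * u n) :=
    fun j => ((Sp (e j)).sub ((S0).mul_left 2)).add (Sp (-e j))
  have SRj : ∀ j : J, Summable (fun n =>
      conj (u n) * u (n + e j) - 2 * (conj (u n) * u n) + conj (u n) * u (n + -e j)) :=
    fun j => ((Sq (e j)).sub ((S0).mul_left 2)).add (Sq (-e j))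
  have SL : Summable (fun n => ∑ j, (conj (u (n + e j)) * u n - 2 * (conj (u n) * u n)
      + conj (u (n + -e j)) * u n)) := summable_sum fun j _ => SLj j
  have SR : Summable (fun n => ∑ j, (conj (u n) * u (n + e j) - 2 * (conj (u n) * u n)
      + conj (u n) * u (n + -e j))) := summable_sum fun j _ => SRj j
  rw [lp.inner_eq_tsum, lp.inner_eq_tsum]
  simp only [RCLike.inner_apply, mul_comm _ ((starRingEnd ℂ) _)]
  rw [tsum_congr hL, tsum_congr hR, Summable.tsum_add SL hcs, Summable.tsum_add SR hcs,
    Summable.tsum_finsetSum fun j _ => SLj j, Summable.tsum_finsetSum fun j _ => SRj j]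
  congr 1
  refine Finset.sum_congr rfl fun j _ => ?_
  rw [Summable.tsum_add ((Sp (e j)).sub ((S0).mul_left 2)) (Sp (-e j)),
    Summable.tsum_add ((Sq (e j)).sub ((S0).mul_left 2)) (Sq (-e j)),
    Summable.tsum_sub (Sp (e j)) ((S0).mul_left 2), Summable.tsum_sub (Sq (e j)) ((S0).mul_left 2),
    my_Q_eq u (e j), my_Q_eq u (-e j), neg_neg]
  ring

lemma my_norm_sq_eq (u : lp (fun _ : ι => ℂ) 2) : ‖u‖ ^ 2 = ∑' n, ‖u n‖ ^ 2 := by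
  have h := lp.norm_rpow_eq_tsum (p := 2) (by norm_num) u
  have heq : ∀ x : ℝ, x ^ (2 : ℝ≥0∞).toReal = x ^ 2 := by
    intro x
    rw [ENNReal.toReal_ofNat, show (2:ℝ) = ((2:ℕ):ℝ) by norm_num, Real.rpow_natCast]
  rw [← heq ‖u‖, h]
  exact tsum_congr fun n => heq _

lemma my_summable_sq' (u : lp (fun _ : ι => ℂ) 2) : Summable (fun n => ‖u n‖ ^ 2) := by
  have h := (lp.memℓp u).summable (p := 2) (by norm_num)
  have heq : ∀ n : ι, ‖u n‖ ^ (2 : ℝ≥0∞).toReal = ‖u n‖ ^ 2 := by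
    intro n
    rw [ENNReal.toReal_ofNat, show (2:ℝ) = ((2:ℕ):ℝ) by norm_num, Real.rpow_natCast]
  simpa [heq] using h

lemma my_symN (σ : ℕ) (u Nu : lp (fun _ : ι => ℂ) 2)
    (hN : ∀ n, Nu n = (‖u n‖ : ℂ) ^ (2 * σ) * u n) :
    (inner ℂ Nu u : ℂ) = inner ℂ u Nu := by
  rw [lp.inner_eq_tsum, lp.inner_eq_tsum]
  simp only [RCLike.inner_apply]
  refine tsum_congr fun n => ?_
  rw [hN n, map_mul, map_pow, Complex.conj_ofReal]
  ring

lemma my_normN_le (σ : ℕ) (u Nu : lp (fun _ : ι => ℂ) 2)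
    (hN : ∀ n, Nu n = (‖u n‖ : ℂ) ^ (2 * σ) * u n) :
    ‖Nu‖ ≤ ‖u‖ ^ (2 * σ + 1) := by
  have hCnn : (0:ℝ) ≤ ‖u‖ ^ (2 * σ + 1) := pow_nonneg (norm_nonneg _) _
  refine lp.norm_le_of_tsum_le (p := 2) (by norm_num) hCnn ?_
  have heq : ∀ x : ℝ, x ^ (2 : ℝ≥0∞).toReal = x ^ 2 := by
    intro x
    rw [ENNReal.toReal_ofNat, show (2:ℝ) = ((2:ℕ):ℝ) by norm_num, Real.rpow_natCast]
  calc ∑' n, ‖Nu n‖ ^ (2 : ℝ≥0∞).toReal = ∑' n, ‖Nu n‖ ^ 2 := tsum_congr fun n => heq _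
    _ ≤ ∑' n, (‖u‖ ^ (2 * σ)) ^ 2 * ‖u n‖ ^ 2 := by
        refine Summable.tsum_le_tsum (fun n => ?_) (my_summable_sq' Nu)
          ((my_summable_sq' u).mul_left _)
        have h1 : ‖Nu n‖ = ‖u n‖ ^ (2 * σ) * ‖u n‖ := by
          rw [hN n, norm_mul, norm_pow, Complex.norm_real, norm_norm]
        rw [h1, mul_pow, ← pow_mul, ← pow_mul]
        have h2 : ‖u n‖ ^ (2 * σ * 2) ≤ (‖u‖ ^ (2 * σ * 2)) := by
          exact pow_le_pow_left₀ (norm_nonneg _) (lp.norm_apply_le_norm two_ne_zero u n) _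
        nlinarith [sq_nonneg (‖u n‖), pow_nonneg (norm_nonneg u) (2*σ*2)]
    _ = (‖u‖ ^ (2 * σ)) ^ 2 * ∑' n, ‖u n‖ ^ 2 := tsum_mul_left
    _ = (‖u‖ ^ (2 * σ + 1)) ^ 2 := by rw [← my_norm_sq_eq]; ring
    _ = (‖u‖ ^ (2 * σ + 1)) ^ (2 : ℝ≥0∞).toReal := (heq _).symm
lemma my_re_inner_self (x : lp (fun _ : ι => ℂ) 2) : (inner ℂ x x : ℂ).re = ‖x‖ ^ 2 := by
  have h := inner_self_eq_norm_sq (𝕜 := ℂ) (x := x)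
  simpa using h

end Aux

set_option maxHeartbeats 1000000

/-- If `v`, `w` solve the linear equation `i v' + Δ_δ v = 0` and the nonlinear
equation `i w' + Δ_δ w + γ |w|^{2σ} w = 0` in `C¹([0,T], l²)`, with
`‖v(0) - w(0)‖ ≤ C₀ ε` and `‖w(0)‖ ≤ C_{w,0} ε`, `0 < ε < 1`, then for any
`T ≤ C_T ε^{-2σ}` one has `‖v(t) - w(t)‖ ≤ (C₀ + |γ| C_{w,0}^{2σ+1} C_T) ε`
on `[0, T]`. -/
theorem stmt5 (d σ : ℕ) (hσ : 0 < σ) (γ V0 T ε C₀ Cw0 CT : ℝ)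
    (hε : 0 < ε) (hε1 : ε < 1) (hC₀ : 0 < C₀) (hCw0 : 0 < Cw0) (hCT : 0 < CT)
    (hT : 0 < T) (hTle : T ≤ CT * ε ^ (-(2 * (σ : ℝ))))
    (Aop : lp (fun _ : Fin d → ℤ => ℂ) 2 →L[ℂ] lp (fun _ : Fin d → ℤ => ℂ) 2)
    (hA : ∀ u : lp (fun _ : Fin d → ℤ => ℂ) 2, ∀ n : Fin d → ℤ,
      (Aop u) n = (∑ j : Fin d,
        (u (n + Pi.single j 1) - 2 * u n + u (n - Pi.single j 1))) +
        (if n = 0 then (V0 : ℂ) else 0) * u n)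
    (N : lp (fun _ : Fin d → ℤ => ℂ) 2 → lp (fun _ : Fin d → ℤ => ℂ) 2)
    (hN : ∀ u : lp (fun _ : Fin d → ℤ => ℂ) 2, ∀ n : Fin d → ℤ,
      (N u) n = (‖u n‖ : ℂ) ^ (2 * σ) * u n)
    (v w : ℝ → lp (fun _ : Fin d → ℤ => ℂ) 2)
    (hv : ∀ t ∈ Set.Icc (0 : ℝ) T, HasDerivAt v (Complex.I • Aop (v t)) t)
    (hw : ∀ t ∈ Set.Icc (0 : ℝ) T,
      HasDerivAt w (Complex.I • (Aop (w t) + (γ : ℂ) • N (w t))) t)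
    (h0 : ‖v 0 - w 0‖ ≤ C₀ * ε) (hw0 : ‖w 0‖ ≤ Cw0 * ε) :
    ∀ t ∈ Set.Icc (0 : ℝ) T,
      ‖v t - w t‖ ≤ (C₀ + |γ| * Cw0 ^ (2 * σ + 1) * CT) * ε := by
  have symA : ∀ u : lp (fun _ : Fin d → ℤ => ℂ) 2,
      (inner ℂ (Aop u) u : ℂ) = inner ℂ u (Aop u) := by
    intro u
    refine my_symA u (fun j : Fin d => Pi.single j 1)
      (fun n => if n = 0 then (V0 : ℂ) else 0) ?_ ?_ (Aop u) (hA u)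
    · intro n; by_cases h : n = 0 <;> simp [h, Complex.conj_ofReal]
    · refine summable_of_ne_finset_zero (s := {(0 : Fin d → ℤ)}) fun n hn => ?_
      simp only [Finset.mem_singleton] at hn
      simp [hn]
  have symN : ∀ u, (inner ℂ (N u) u : ℂ) = inner ℂ u (N u) :=
    fun u => my_symN σ u (N u) (hN u)
  -- norm conservation for w
  have wconst : ∀ s ∈ Set.Icc (0:ℝ) T, ‖w s‖ = ‖w 0‖ := by
    set F : ℝ → ℂ := fun s => inner ℂ (w s) (w s) with hF
    have hFd : ∀ s ∈ Set.Icc (0:ℝ) T, HasDerivAt F 0 s := by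
      intro s hs
      have h1 := HasDerivAt.inner ℂ (hw s hs) (hw s hs)
      refine h1.congr_deriv ?_
      set X := Aop (w s) + (γ : ℂ) • N (w s) with hX
      have hsym : (inner ℂ X (w s) : ℂ) = inner ℂ (w s) X := by
        rw [hX, inner_add_left, inner_add_right, inner_smul_left, inner_smul_right,
          Complex.conj_ofReal, symA, symN]
      rw [inner_smul_right, inner_smul_left, Complex.conj_I, hsym]
      ring
    have hcont : ContinuousOn F (Set.Icc 0 T) :=
      fun s hs => ((hFd s hs).continuousAt).continuousWithinAt
    have hconst := constant_of_has_deriv_right_zero hcont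
      (fun s hs => ((hFd s (Set.mem_Icc_of_Ico hs)).hasDerivWithinAt))
    intro s hs
    have h2 := hconst s hs
    have h3 : ‖w s‖ ^ 2 = ‖w 0‖ ^ 2 := by
      have h4 := congrArg Complex.re h2
      simpa [hF, my_re_inner_self, ← Complex.ofReal_pow, Complex.ofReal_re] using h4
    calc ‖w s‖ = Real.sqrt (‖w s‖ ^ 2) := (Real.sqrt_sq (norm_nonneg _)).symm
      _ = Real.sqrt (‖w 0‖ ^ 2) := by rw [h3]
      _ = ‖w 0‖ := Real.sqrt_sq (norm_nonneg _)
  set M : ℝ := (Cw0 * ε) ^ (2 * σ + 1) with hMdef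
  have hMnn : 0 ≤ M := pow_nonneg (by positivity) _
  have hM : ∀ s ∈ Set.Icc (0:ℝ) T, ‖N (w s)‖ ≤ M := by
    intro s hs
    calc ‖N (w s)‖ ≤ ‖w s‖ ^ (2 * σ + 1) := my_normN_le σ _ _ (hN _)
      _ = ‖w 0‖ ^ (2 * σ + 1) := by rw [wconst s hs]
      _ ≤ (Cw0 * ε) ^ (2 * σ + 1) := pow_le_pow_left₀ (norm_nonneg _) hw0 _
  set z : ℝ → lp (fun _ : Fin d → ℤ => ℂ) 2 := fun s => v s - w s with hzdef
  have hzd : ∀ s ∈ Set.Icc (0:ℝ) T,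
      HasDerivAt z (Complex.I • Aop (z s) - (Complex.I * γ) • N (w s)) s := by
    intro s hs
    have h := (hv s hs).sub (hw s hs)
    refine h.congr_deriv ?_
    simp only [hzdef, map_sub, smul_sub, smul_add, smul_smul]
    abel
  -- main estimate with regularization δ
  intro t ht
  obtain ⟨ht0, htT⟩ := ht
  have key : ∀ δ : ℝ, 0 < δ → ‖z t‖ ≤ ‖z 0‖ + |γ| * M * t + δ := by
    intro δ hδ
    set G : ℝ → ℝ := fun s => Complex.re (inner ℂ (z s) (z s) : ℂ) + δ ^ 2 with hGdef
    have hGval : ∀ s, G s = ‖z s‖ ^ 2 + δ ^ 2 := by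
      intro s; rw [hGdef]; simp only [my_re_inner_self]
    have hGpos : ∀ s, 0 < G s := by
      intro s; rw [hGval]; positivity
    have hzG : ∀ s, ‖z s‖ ≤ Real.sqrt (G s) := by
      intro s
      rw [show ‖z s‖ = Real.sqrt (‖z s‖ ^ 2) from (Real.sqrt_sq (norm_nonneg _)).symm]
      apply Real.sqrt_le_sqrt
      rw [hGval]; nlinarith
    set D : ℝ → lp (fun _ : Fin d → ℤ => ℂ) 2 :=
      fun s => Complex.I • Aop (z s) - (Complex.I * γ) • N (w s) with hDdef
    have hGd : ∀ s ∈ Set.Icc (0:ℝ) T,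
        HasDerivAt G (2 * Complex.re (inner ℂ (z s) (D s) : ℂ)) s := by
      intro s hs
      have h1 := HasDerivAt.inner ℂ (hzd s hs) (hzd s hs)
      have h2 := (Complex.reCLM.hasFDerivAt.comp_hasDerivAt s h1).add_const (δ ^ 2)
      refine h2.congr_deriv ?_
      have h3 : (inner ℂ (D s) (z s) : ℂ) = conj (inner ℂ (z s) (D s) : ℂ) :=
        (inner_conj_symm _ _).symm
      simp only [hDdef] at h3 ⊢
      simp only [Complex.reCLM_apply, Complex.add_re, h3, Complex.conj_re]
      ring
    have hGbound : ∀ s ∈ Set.Icc (0:ℝ) T,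
        |2 * Complex.re (inner ℂ (z s) (D s) : ℂ)| ≤ 2 * (|γ| * M) * Real.sqrt (G s) := by
      intro s hs
      have hreal : Complex.re (Complex.I * (inner ℂ (z s) (Aop (z s)) : ℂ)) = 0 := by
        have hq : conj (inner ℂ (z s) (Aop (z s)) : ℂ) = inner ℂ (z s) (Aop (z s)) := by
          rw [inner_conj_symm]; exact symA (z s)
        rw [Complex.conj_eq_iff_im] at hq
        simp [Complex.mul_re, hq]
      have hsplit : (inner ℂ (z s) (D s) : ℂ) =
          Complex.I * inner ℂ (z s) (Aop (z s)) - (Complex.I * γ) * inner ℂ (z s) (N (w s)) := by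
        rw [hDdef]
        simp only [inner_sub_right, inner_smul_right]
      rw [hsplit]
      have habs : |Complex.re ((Complex.I * γ) * (inner ℂ (z s) (N (w s)) : ℂ))|
          ≤ |γ| * (‖z s‖ * ‖N (w s)‖) := by
        calc |Complex.re ((Complex.I * γ) * (inner ℂ (z s) (N (w s)) : ℂ))|
            ≤ ‖(Complex.I * γ) * (inner ℂ (z s) (N (w s)) : ℂ)‖ :=
              Complex.abs_re_le_norm _
          _ = |γ| * ‖(inner ℂ (z s) (N (w s)) : ℂ)‖ := by
              rw [norm_mul, norm_mul, Complex.norm_I, Complex.norm_real, Real.norm_eq_abs, one_mul]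
          _ ≤ |γ| * (‖z s‖ * ‖N (w s)‖) := by
              exact mul_le_mul_of_nonneg_left (norm_inner_le_norm _ _) (abs_nonneg _)
      have hzNs : ‖z s‖ * ‖N (w s)‖ ≤ Real.sqrt (G s) * M := by
        apply mul_le_mul (hzG s) (hM s hs) (norm_nonneg _) (Real.sqrt_nonneg _)
      rw [Complex.sub_re, hreal, zero_sub, abs_mul, abs_neg]
      calc |(2:ℝ)| * |Complex.re ((Complex.I * γ) * (inner ℂ (z s) (N (w s)) : ℂ))|
          ≤ 2 * (|γ| * (Real.sqrt (G s) * M)) := by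
            rw [abs_two]
            refine mul_le_mul_of_nonneg_left (habs.trans ?_) (by norm_num)
            exact mul_le_mul_of_nonneg_left hzNs (abs_nonneg _)
        _ = 2 * (|γ| * M) * Real.sqrt (G s) := by ring
    set φ : ℝ → ℝ := fun s => Real.sqrt (G s) with hφdef
    have hφd : ∀ s ∈ Set.Icc (0:ℝ) T,
        HasDerivWithinAt φ ((2 * Complex.re (inner ℂ (z s) (D s) : ℂ)) / (2 * Real.sqrt (G s)))
          (Set.Icc 0 T) s :=
      fun s hs => (((hGd s hs).sqrt (hGpos s).ne')).hasDerivWithinAt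
    have hφbound : ∀ s ∈ Set.Icc (0:ℝ) T,
        ‖(2 * Complex.re (inner ℂ (z s) (D s) : ℂ)) / (2 * Real.sqrt (G s))‖ ≤ |γ| * M := by
      intro s hs
      have hs0 : 0 < Real.sqrt (G s) := Real.sqrt_pos.mpr (hGpos s)
      rw [Real.norm_eq_abs, abs_div,
        abs_of_pos (show (0:ℝ) < 2 * Real.sqrt (G s) by positivity)]
      rw [div_le_iff₀ (by positivity)]
      calc |2 * Complex.re (inner ℂ (z s) (D s) : ℂ)| ≤ 2 * (|γ| * M) * Real.sqrt (G s) :=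
            hGbound s hs
        _ = |γ| * M * (2 * Real.sqrt (G s)) := by ring
    have hmv := Convex.norm_image_sub_le_of_norm_hasDerivWithin_le hφd hφbound (convex_Icc 0 T)
      (Set.left_mem_Icc.mpr hT.le) ⟨ht0, htT⟩
    have hφt : φ t ≤ φ 0 + |γ| * M * t := by
      have h5 : |φ t - φ 0| ≤ |γ| * M * |t - 0| := by
        simpa [Real.norm_eq_abs] using hmv
      rw [sub_zero, abs_of_nonneg ht0] at h5
      have := abs_le.mp h5
      linarith [this.2]
    have hφ0 : φ 0 ≤ ‖z 0‖ + δ := by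
      rw [hφdef]
      simp only
      rw [hGval 0]
      rw [show ‖z 0‖ + δ = Real.sqrt ((‖z 0‖ + δ)^2) from
        (Real.sqrt_sq (by positivity)).symm]
      apply Real.sqrt_le_sqrt
      nlinarith [norm_nonneg (z 0), hδ.le]
    calc ‖z t‖ ≤ φ t := hzG t
      _ ≤ φ 0 + |γ| * M * t := hφt
      _ ≤ ‖z 0‖ + δ + |γ| * M * t := by linarith
      _ = ‖z 0‖ + |γ| * M * t + δ := by ring
  have hzt : ‖z t‖ ≤ ‖z 0‖ + |γ| * M * t := by
    by_contra hcon
    push_neg at hcon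
    have hδ := key ((‖z t‖ - (‖z 0‖ + |γ| * M * t)) / 2) (by linarith)
    linarith
  -- final arithmetic
  have hMt : |γ| * M * t ≤ |γ| * Cw0 ^ (2 * σ + 1) * CT * ε := by
    have h1 : |γ| * M * t ≤ |γ| * M * (CT * ε ^ (-(2 * (σ:ℝ)))) := by
      apply mul_le_mul_of_nonneg_left (htT.trans hTle) (by positivity)
    have h2 : ε ^ (2 * σ + 1) * ε ^ (-(2 * (σ:ℝ))) = ε := by
      rw [← Real.rpow_natCast ε (2 * σ + 1), ← Real.rpow_add hε]
      rw [show (((2 * σ + 1 : ℕ)):ℝ) + -(2 * (σ:ℝ)) = 1 by push_cast; ring, Real.rpow_one]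
    calc |γ| * M * t ≤ |γ| * M * (CT * ε ^ (-(2 * (σ:ℝ)))) := h1
      _ = |γ| * Cw0 ^ (2 * σ + 1) * CT * (ε ^ (2 * σ + 1) * ε ^ (-(2 * (σ:ℝ)))) := by
          rw [hMdef, mul_pow]; ring
      _ = |γ| * Cw0 ^ (2 * σ + 1) * CT * ε := by rw [h2]
  calc ‖v t - w t‖ = ‖z t‖ := rfl
    _ ≤ ‖z 0‖ + |γ| * M * t := hzt
    _ ≤ C₀ * ε + |γ| * Cw0 ^ (2 * σ + 1) * CT * ε := add_le_add h0 hMt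
    _ = (C₀ + |γ| * Cw0 ^ (2 * σ + 1) * CT) * ε := by ring
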